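/- arXiv:2601.17559 — 2 statements merged into one kernel-verified Lean document; each statement's English description precedes it below -/
import Mathlib

section
/- For every k ≥ 1, the commutator subgroup of GL₂(ℤ/2^kℤ) acts transitively on the set of vectors of exact additive order 2^k in (ℤ/2^kℤ)². -/
open Matrix

open scoped commutatorElement

namespace Stmt15Aux

variable {R : Type} [CommRing R]

private lemma fin2_ext {a b c d a' b' c' d' : R} (h1 : a = a') (h2 : b = b')
    (h3 : c = c') (h4 : d = d') : !![a, b; c, d] = !![a', b'; c', d'] := by
  subst h1 h2 h3 h4; rfl

lemma vec2_ext {x y a b : R} (h1 : x = a) (h2 : y = b) :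
    (![x, y] : Fin 2 → R) = ![a, b] := by subst h1 h2; rfl

lemma mulVec2 (a b c d x y : R) :
    (!![a, b; c, d]) *ᵥ ![x, y] = ![a * x + b * y, c * x + d * y] := by
  funext i
  fin_cases i <;>
    simp [Matrix.mulVec, dotProduct, Fin.sum_univ_two]

def E12 (t : R) : GL (Fin 2) R :=
  ⟨!![1, t; 0, 1], !![1, -t; 0, 1],
    by simp [Matrix.mul_fin_two, Matrix.one_fin_two],
    by simp [Matrix.mul_fin_two, Matrix.one_fin_two]⟩

def E21 (t : R) : GL (Fin 2) R :=
  ⟨!![1, 0; t, 1], !![1, 0; -t, 1],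
    by simp [Matrix.mul_fin_two, Matrix.one_fin_two],
    by simp [Matrix.mul_fin_two, Matrix.one_fin_two]⟩

def Sw : GL (Fin 2) R :=
  ⟨!![0, 1; 1, 0], !![0, 1; 1, 0],
    by simp [Matrix.mul_fin_two, Matrix.one_fin_two],
    by simp [Matrix.mul_fin_two, Matrix.one_fin_two]⟩

def Cc : GL (Fin 2) R :=
  ⟨!![1, -1; 1, 0], !![0, 1; -1, 1],
    by simp [Matrix.mul_fin_two, Matrix.one_fin_two],
    by simp [Matrix.mul_fin_two, Matrix.one_fin_two]⟩

def Dg (u : Rˣ) : GL (Fin 2) R :=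
  ⟨!![(u : R), 0; 0, 1], !![((u⁻¹ : Rˣ) : R), 0; 0, 1],
    by simp [Matrix.mul_fin_two, Matrix.one_fin_two],
    by simp [Matrix.mul_fin_two, Matrix.one_fin_two]⟩

def Dg' (u : Rˣ) : GL (Fin 2) R :=
  ⟨!![1, 0; 0, (u : R)], !![1, 0; 0, ((u⁻¹ : Rˣ) : R)],
    by simp [Matrix.mul_fin_two, Matrix.one_fin_two],
    by simp [Matrix.mul_fin_two, Matrix.one_fin_two]⟩

lemma coe_E12 (t : R) : ((E12 t : GL (Fin 2) R) : Matrix (Fin 2) (Fin 2) R) = !![1, t; 0, 1] := rfl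
lemma coe_E21 (t : R) : ((E21 t : GL (Fin 2) R) : Matrix (Fin 2) (Fin 2) R) = !![1, 0; t, 1] := rfl
lemma coe_Cc : ((Cc : GL (Fin 2) R) : Matrix (Fin 2) (Fin 2) R) = !![1, -1; 1, 0] := rfl
lemma coe_Cc_inv : (((Cc : GL (Fin 2) R)⁻¹ : GL (Fin 2) R) : Matrix (Fin 2) (Fin 2) R)
    = !![0, 1; -1, 1] := rfl

lemma comm_E12 (u : Rˣ) (t : R) : ⁅Dg u, E12 t⁆ = E12 (((u : R) - 1) * t) := by
  have hu : (u : R) * ((u⁻¹ : Rˣ) : R) = 1 := u.mul_inv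
  apply Units.ext
  show !![(u : R), 0; 0, 1] * !![1, t; 0, 1] * !![((u⁻¹ : Rˣ) : R), 0; 0, 1] * !![1, -t; 0, 1]
      = !![1, ((u : R) - 1) * t; 0, 1]
  rw [Matrix.mul_fin_two, Matrix.mul_fin_two, Matrix.mul_fin_two]
  refine fin2_ext ?_ ?_ ?_ ?_
  · linear_combination hu
  · linear_combination (-t) * hu
  · ring
  · ring

lemma comm_E21 (u : Rˣ) (t : R) : ⁅Dg' u, E21 t⁆ = E21 (((u : R) - 1) * t) := by
  have hu : (u : R) * ((u⁻¹ : Rˣ) : R) = 1 := u.mul_inv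
  apply Units.ext
  show !![1, 0; 0, (u : R)] * !![1, 0; t, 1] * !![1, 0; 0, ((u⁻¹ : Rˣ) : R)] * !![1, 0; -t, 1]
      = !![1, 0; ((u : R) - 1) * t, 1]
  rw [Matrix.mul_fin_two, Matrix.mul_fin_two, Matrix.mul_fin_two]
  refine fin2_ext ?_ ?_ ?_ ?_
  · ring
  · ring
  · linear_combination (-t) * hu
  · linear_combination hu

lemma comm_Cc : ⁅(Sw : GL (Fin 2) R), E12 (1 : R)⁆ = Cc := by
  apply Units.ext
  show !![0, 1; 1, 0] * !![1, (1 : R); 0, 1] * !![0, 1; 1, 0] * !![1, -(1 : R); 0, 1]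
      = !![1, -1; 1, 0]
  rw [Matrix.mul_fin_two, Matrix.mul_fin_two, Matrix.mul_fin_two]
  refine fin2_ext ?_ ?_ ?_ ?_ <;> ring

section ZModPart

variable {k : ℕ}

lemma exists_nat (a : ZMod (2 ^ k)) : ∃ m : ℕ, a = (m : ZMod (2 ^ k)) := by
  haveI : NeZero (2 ^ k) := ⟨pow_ne_zero k two_ne_zero⟩
  exact ⟨a.val, by simp [ZMod.natCast_val, ZMod.cast_id]⟩

lemma isUnit_iff (hk : 1 ≤ k) (a : ZMod (2 ^ k)) :
    IsUnit a ↔ ∃ t : ZMod (2 ^ k), a = 2 * t + 1 := by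
  obtain ⟨m, rfl⟩ := exists_nat a
  constructor
  · intro h
    have hc : m.Coprime (2 ^ k) := (ZMod.isUnit_iff_coprime m (2 ^ k)).mp h
    have h2 : m.Coprime 2 :=
      Nat.Coprime.coprime_dvd_right (dvd_pow_self 2 (by omega : k ≠ 0)) hc
    obtain ⟨r, hr⟩ := Nat.coprime_two_right.mp h2
    refine ⟨(r : ZMod (2 ^ k)), ?_⟩
    rw [hr]; push_cast; ring
  · rintro ⟨t, ht⟩
    obtain ⟨s, rfl⟩ := exists_nat t
    have : ((m : ℕ) : ZMod (2 ^ k)) = ((2 * s + 1 : ℕ) : ZMod (2 ^ k)) := by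
      rw [ht]; push_cast; ring
    rw [this]
    refine (ZMod.isUnit_iff_coprime _ _).mpr (Nat.Coprime.pow_right k ?_)
    exact Nat.coprime_two_right.mpr ⟨s, by ring⟩

lemma even_of_not_isUnit (a : ZMod (2 ^ k)) (h : ¬IsUnit a) :
    ∃ t : ZMod (2 ^ k), a = 2 * t := by
  obtain ⟨m, rfl⟩ := exists_nat a
  rcases Nat.even_or_odd m with ⟨r, hr⟩ | hm
  · exact ⟨(r : ZMod (2 ^ k)), by rw [hr]; push_cast; ring⟩
  · exact absurd ((ZMod.isUnit_iff_coprime m (2 ^ k)).mpr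
      (Nat.Coprime.pow_right k (Odd.coprime_two_right hm))) h

lemma isUnit_coord (hk : 1 ≤ k) (v : Fin 2 → ZMod (2 ^ k)) (hv : addOrderOf v = 2 ^ k) :
    IsUnit (v 0) ∨ IsUnit (v 1) := by
  by_contra h
  push_neg at h
  obtain ⟨t0, h0⟩ := even_of_not_isUnit (v 0) h.1
  obtain ⟨t1, h1⟩ := even_of_not_isUnit (v 1) h.2
  have h2k : ((2 : ZMod (2 ^ k))) ^ k = 0 := by
    have := ZMod.natCast_self (2 ^ k)
    push_cast at this
    exact this
  have key : ∀ t : ZMod (2 ^ k), (2 ^ (k - 1) : ℕ) • (2 * t) = 0 := by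
    intro t
    have hks : k - 1 + 1 = k := by omega
    calc (2 ^ (k - 1) : ℕ) • (2 * t) = ((2 : ZMod (2 ^ k)) ^ (k - 1)) * (2 * t) := by
          rw [nsmul_eq_mul]; push_cast; ring
      _ = ((2 : ZMod (2 ^ k)) ^ (k - 1 + 1)) * t := by rw [pow_succ]; ring
      _ = 0 := by rw [hks, h2k, zero_mul]
  have hz : (2 ^ (k - 1) : ℕ) • v = 0 := by
    funext i
    have : (2 ^ (k - 1) : ℕ) • v i = 0 := by
      fin_cases i
      · show (2 ^ (k - 1) : ℕ) • v 0 = 0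
        rw [h0]; exact key t0
      · show (2 ^ (k - 1) : ℕ) • v 1 = 0
        rw [h1]; exact key t1
    simpa using this
  have hdvd := addOrderOf_dvd_of_nsmul_eq_zero hz
  rw [hv] at hdvd
  have hle : 2 ^ k ≤ 2 ^ (k - 1) := Nat.le_of_dvd (Nat.pow_pos (by norm_num)) hdvd
  have hlt : 2 ^ (k - 1) < 2 ^ k := Nat.pow_lt_pow_right one_lt_two (by omega)
  omega

lemma isUnit_three (hk : 1 ≤ k) : IsUnit (3 : ZMod (2 ^ k)) :=
  (isUnit_iff hk 3).mpr ⟨1, by ring⟩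

lemma memE12 (hk : 1 ≤ k) (t : ZMod (2 ^ k)) :
    E12 (2 * t) ∈ commutator (GL (Fin 2) (ZMod (2 ^ k))) := by
  have h3 := isUnit_three hk
  have heq : E12 (2 * t) = ⁅Dg h3.unit, E12 t⁆ := by
    rw [comm_E12]
    congr 1
    rw [h3.unit_spec]
    norm_num
  rw [heq, commutator_def]
  exact Subgroup.commutator_mem_commutator (Subgroup.mem_top _) (Subgroup.mem_top _)

lemma memE21 (hk : 1 ≤ k) (t : ZMod (2 ^ k)) :
    E21 (2 * t) ∈ commutator (GL (Fin 2) (ZMod (2 ^ k))) := by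
  have h3 := isUnit_three hk
  have heq : E21 (2 * t) = ⁅Dg' h3.unit, E21 t⁆ := by
    rw [comm_E21]
    congr 1
    rw [h3.unit_spec]
    norm_num
  rw [heq, commutator_def]
  exact Subgroup.commutator_mem_commutator (Subgroup.mem_top _) (Subgroup.mem_top _)

lemma memCc : (Cc : GL (Fin 2) (ZMod (2 ^ k))) ∈ commutator (GL (Fin 2) (ZMod (2 ^ k))) := by
  rw [← comm_Cc, commutator_def]
  exact Subgroup.commutator_mem_commutator (Subgroup.mem_top _) (Subgroup.mem_top _)

lemma reach1 (hk : 1 ≤ k) (a b : ZMod (2 ^ k)) (ha : IsUnit a) (hb : IsUnit b) :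
    ∃ g : GL (Fin 2) (ZMod (2 ^ k)), g ∈ commutator (GL (Fin 2) (ZMod (2 ^ k))) ∧
      (g : Matrix (Fin 2) (Fin 2) (ZMod (2 ^ k))) *ᵥ ![1, 0] = ![a, b] := by
  obtain ⟨α, hα⟩ := (isUnit_iff hk a).mp ha
  obtain ⟨β, hβ⟩ := (isUnit_iff hk b).mp hb
  obtain ⟨ub, rfl⟩ := hb
  have hbinv : ((ub⁻¹ : (ZMod (2 ^ k))ˣ) : ZMod (2 ^ k)) * (2 * β + 1) = 1 := by
    rw [← hβ]; exact ub.inv_mul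
  refine ⟨E12 (2 * (α * ((ub⁻¹ : (ZMod (2 ^ k))ˣ) : ZMod (2 ^ k)))) * E21 (2 * β) * Cc,
    mul_mem (mul_mem (memE12 hk _) (memE21 hk _)) memCc, ?_⟩
  rw [Units.val_mul, Units.val_mul, ← Matrix.mulVec_mulVec, ← Matrix.mulVec_mulVec,
    coe_E12, coe_E21, coe_Cc, mulVec2, mulVec2, mulVec2]
  refine vec2_ext ?_ ?_
  · linear_combination 2 * α * hbinv - hα
  · linear_combination -hβ

lemma reach (hk : 1 ≤ k) (a b : ZMod (2 ^ k)) (hab : IsUnit a ∨ IsUnit b) :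
    ∃ g : GL (Fin 2) (ZMod (2 ^ k)), g ∈ commutator (GL (Fin 2) (ZMod (2 ^ k))) ∧
      (g : Matrix (Fin 2) (Fin 2) (ZMod (2 ^ k))) *ᵥ ![1, 0] = ![a, b] := by
  by_cases hA : IsUnit a <;> by_cases hB : IsUnit b
  · exact reach1 hk a b hA hB
  · -- a unit, b even
    obtain ⟨α, hα⟩ := (isUnit_iff hk a).mp hA
    obtain ⟨β, hβ⟩ := even_of_not_isUnit b hB
    have hab' : IsUnit (a - b) := (isUnit_iff hk _).mpr ⟨α - β, by rw [hα, hβ]; ring⟩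
    obtain ⟨g1, hg1m, hg1⟩ := reach1 hk (a - b) a hab' hA
    refine ⟨Cc⁻¹ * g1, mul_mem (inv_mem memCc) hg1m, ?_⟩
    rw [Units.val_mul, ← Matrix.mulVec_mulVec, hg1, coe_Cc_inv, mulVec2]
    refine vec2_ext (by ring) (by ring)
  · -- a even, b unit
    obtain ⟨β, hβ⟩ := (isUnit_iff hk b).mp hB
    obtain ⟨α, hα⟩ := even_of_not_isUnit a hA
    have hab' : IsUnit (b - a) := (isUnit_iff hk _).mpr ⟨β - α, by rw [hα, hβ]; ring⟩
    obtain ⟨g1, hg1m, hg1⟩ := reach1 hk b (b - a) hB hab'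
    refine ⟨Cc * g1, mul_mem memCc hg1m, ?_⟩
    rw [Units.val_mul, ← Matrix.mulVec_mulVec, hg1, coe_Cc, mulVec2]
    refine vec2_ext (by ring) (by ring)
  · exact absurd hab (by simp [hA, hB])

end ZModPart

end Stmt15Aux

/-- For every `k ≥ 1`, the commutator subgroup of `GL₂(ℤ/2^kℤ)` acts
transitively on the vectors of exact additive order `2^k` in `(ℤ/2^kℤ)²`. -/
theorem stmt15 (k : ℕ) (hk : 1 ≤ k) (v w : Fin 2 → ZMod (2 ^ k))
    (hv : addOrderOf v = 2 ^ k) (hw : addOrderOf w = 2 ^ k) :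
    ∃ g : GL (Fin 2) (ZMod (2 ^ k)), g ∈ commutator (GL (Fin 2) (ZMod (2 ^ k))) ∧
      (g : Matrix (Fin 2) (Fin 2) (ZMod (2 ^ k))).mulVec v = w := by
  have hv' := Stmt15Aux.isUnit_coord hk v hv
  have hw' := Stmt15Aux.isUnit_coord hk w hw
  obtain ⟨g1, hg1m, hg1⟩ := Stmt15Aux.reach hk (v 0) (v 1) hv'
  obtain ⟨g2, hg2m, hg2⟩ := Stmt15Aux.reach hk (w 0) (w 1) hw'
  have hvv : ![v 0, v 1] = v := by funext i; fin_cases i <;> rfl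
  have hww : ![w 0, w 1] = w := by funext i; fin_cases i <;> rfl
  rw [hvv] at hg1
  rw [hww] at hg2
  refine ⟨g2 * g1⁻¹, mul_mem hg2m (inv_mem hg1m), ?_⟩
  have h1 : ((g1⁻¹ : GL (Fin 2) (ZMod (2 ^ k))) : Matrix (Fin 2) (Fin 2) (ZMod (2 ^ k))) *ᵥ v
      = ![1, 0] := by
    rw [← hg1, Matrix.mulVec_mulVec]
    have : ((g1⁻¹ : GL (Fin 2) (ZMod (2 ^ k))) : Matrix (Fin 2) (Fin 2) (ZMod (2 ^ k))) *
        (g1 : Matrix (Fin 2) (Fin 2) (ZMod (2 ^ k))) = 1 := g1.inv_mul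
    rw [this, Matrix.one_mulVec]
  rw [Units.val_mul, ← Matrix.mulVec_mulVec, h1, hg2]
end

section
/- For every n ≥ 1, the commutator subgroup of GL₂(ℤ/nℤ) acts transitively on the set Vₙ of vectors of exact additive order n in (ℤ/nℤ)². -/
open Matrix

namespace Stmt17Aux

open scoped commutatorElement

/-- Upper unipotent matrix as an element of `GL₂`. -/
def Um (n : ℕ) (b : ZMod n) : GL (Fin 2) (ZMod n) :=
  ⟨!![1,b;0,1], !![1,-b;0,1],
    by ext i j; fin_cases i <;> fin_cases j <;> simp [Matrix.mul_apply, Fin.sum_univ_two],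
    by ext i j; fin_cases i <;> fin_cases j <;> simp [Matrix.mul_apply, Fin.sum_univ_two]⟩

/-- Lower unipotent matrix as an element of `GL₂`. -/
def Lm (n : ℕ) (b : ZMod n) : GL (Fin 2) (ZMod n) :=
  ⟨!![1,0;b,1], !![1,0;-b,1],
    by ext i j; fin_cases i <;> fin_cases j <;> simp [Matrix.mul_apply, Fin.sum_univ_two],
    by ext i j; fin_cases i <;> fin_cases j <;> simp [Matrix.mul_apply, Fin.sum_univ_two]⟩

/-- The swap matrix as an element of `GL₂`. -/
def Am (n : ℕ) : GL (Fin 2) (ZMod n) :=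
  ⟨!![0,1;1,0], !![0,1;1,0],
    by ext i j; fin_cases i <;> fin_cases j <;> simp [Matrix.mul_apply, Fin.sum_univ_two],
    by ext i j; fin_cases i <;> fin_cases j <;> simp [Matrix.mul_apply, Fin.sum_univ_two]⟩

lemma Um_inv (n : ℕ) (b : ZMod n) : (Um n b)⁻¹ = Um n (-b) := by
  apply Units.ext
  show !![(1 : ZMod n),-b;0,1] = !![1,-b;0,1]
  rfl

lemma Am_inv (n : ℕ) : (Am n)⁻¹ = Am n := Units.ext rfl

lemma Um_mul (n : ℕ) (b c : ZMod n) : Um n b * Um n c = Um n (b + c) := by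
  apply Units.ext
  show (!![(1 : ZMod n),b;0,1] : Matrix _ _ _) * !![1,c;0,1] = !![1,b+c;0,1]
  ext i j; fin_cases i <;> fin_cases j <;>
    simp [Matrix.mul_apply, Fin.sum_univ_two] <;> ring

lemma conj_Um (n : ℕ) (b : ZMod n) : Am n * Um n b * (Am n)⁻¹ = Lm n b := by
  rw [Am_inv]
  apply Units.ext
  show (!![(0 : ZMod n),1;1,0] : Matrix _ _ _) * !![1,b;0,1] * !![0,1;1,0] = !![1,0;b,1]
  ext i j; fin_cases i <;> fin_cases j <;>
    simp [Matrix.mul_apply, Fin.sum_univ_two]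

lemma Lm_eq (n : ℕ) (b : ZMod n) : Lm n b = ⁅Am n, Um n b⁆ * Um n b := by
  rw [commutatorElement_def, inv_mul_cancel_right, conj_Um]

/-- Membership in the coset space `[G,G] ⬝ {U(b)}`. -/
def P (n : ℕ) (g : GL (Fin 2) (ZMod n)) : Prop :=
  ∃ h ∈ commutator (GL (Fin 2) (ZMod n)), ∃ b : ZMod n, g = h * Um n b

lemma P_Um (n : ℕ) (b : ZMod n) : P n (Um n b) :=
  ⟨1, Subgroup.one_mem _, b, (one_mul _).symm⟩

lemma P_Lm (n : ℕ) (b : ZMod n) : P n (Lm n b) :=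
  ⟨⁅Am n, Um n b⁆,
    Subgroup.commutator_mem_commutator (Subgroup.mem_top _) (Subgroup.mem_top _),
    b, Lm_eq n b⟩

lemma P_mul (n : ℕ) {g₁ g₂ : GL (Fin 2) (ZMod n)} (h₁ : P n g₁) (h₂ : P n g₂) :
    P n (g₁ * g₂) := by
  obtain ⟨h, hh, b, rfl⟩ := h₁
  obtain ⟨k, hk, c, rfl⟩ := h₂
  refine ⟨h * (Um n b * k * (Um n b)⁻¹), ?_, b + c, ?_⟩
  · exact Subgroup.mul_mem _ hh ((Subgroup.commutator_normal ⊤ ⊤).conj_mem k hk _)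
  · rw [← Um_mul]; group

/-- Elements satisfying `P` fixing `![1,0]` truncate to commutator elements. -/
lemma P_e1 (n : ℕ) {g : GL (Fin 2) (ZMod n)} (hg : P n g) :
    ∃ h : GL (Fin 2) (ZMod n), h ∈ commutator (GL (Fin 2) (ZMod n)) ∧
      (h : Matrix (Fin 2) (Fin 2) (ZMod n)).mulVec ![1, 0] =
        (g : Matrix (Fin 2) (Fin 2) (ZMod n)).mulVec ![1, 0] := by
  obtain ⟨h, hh, b, rfl⟩ := hg
  refine ⟨h, hh, ?_⟩
  have hUe : ((Um n b : GL (Fin 2) (ZMod n)) : Matrix (Fin 2) (Fin 2) (ZMod n)).mulVec ![1,0]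
      = ![1,0] := by
    show (!![(1 : ZMod n),b;0,1] : Matrix _ _ _).mulVec ![1,0] = ![1,0]
    funext i; fin_cases i <;> simp [Matrix.mulVec, dotProduct, Fin.sum_univ_two]
  rw [Units.val_mul, ← Matrix.mulVec_mulVec, hUe]

lemma Um_mulVec (n : ℕ) (b x y : ZMod n) :
    ((Um n b : GL (Fin 2) (ZMod n)) : Matrix (Fin 2) (Fin 2) (ZMod n)).mulVec ![x, y]
      = ![x + b * y, y] := by
  show (!![(1 : ZMod n),b;0,1] : Matrix _ _ _).mulVec ![x,y] = _
  funext i; fin_cases i <;>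
    simp [Matrix.mulVec, dotProduct, Fin.sum_univ_two]

lemma Lm_mulVec (n : ℕ) (b x y : ZMod n) :
    ((Lm n b : GL (Fin 2) (ZMod n)) : Matrix (Fin 2) (Fin 2) (ZMod n)).mulVec ![x, y]
      = ![x, y + b * x] := by
  show (!![(1 : ZMod n),0;b,1] : Matrix _ _ _).mulVec ![x,y] = _
  funext i; fin_cases i <;>
    simp [Matrix.mulVec, dotProduct, Fin.sum_univ_two] <;> ring

/-- key number-theoretic lemma: a unimodular pair can be completed to a unit. -/
lemma exists_coprime_add (n a b : ℕ) (hn : n ≠ 0)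
    (h : Nat.gcd a (Nat.gcd b n) = 1) :
    ∃ t : ℕ, Nat.Coprime (a + t * b) n := by
  refine ⟨∏ p ∈ n.primeFactors.filter (fun p => ¬ p ∣ a), p, ?_⟩
  set t := ∏ p ∈ n.primeFactors.filter (fun p => ¬ p ∣ a), p with ht
  by_contra hc
  rw [Nat.Prime.not_coprime_iff_dvd] at hc
  obtain ⟨p, pp, hp1, hp2⟩ := hc
  by_cases hpa : p ∣ a
  · have hpb : ¬ p ∣ b := by
      intro hpb
      have : p ∣ Nat.gcd a (Nat.gcd b n) := Nat.dvd_gcd hpa (Nat.dvd_gcd hpb hp2)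
      rw [h] at this
      exact pp.ne_one (Nat.dvd_one.mp this)
    have hpt : ¬ p ∣ t := by
      intro hpt
      obtain ⟨q, hq, hpq⟩ := (pp.prime.dvd_finset_prod_iff _).mp hpt
      have hq' := Finset.mem_filter.mp hq
      have hqp : q.Prime := (Nat.mem_primeFactors.mp hq'.1).1
      have : p = q := (Nat.prime_dvd_prime_iff_eq pp hqp).mp hpq
      exact hq'.2 (this ▸ hpa)
    have : p ∣ t * b := by
      have := Nat.dvd_sub hp1 hpa
      rwa [Nat.add_sub_cancel_left] at this
    rcases pp.dvd_mul.mp this with h' | h'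
    · exact hpt h'
    · exact hpb h'
  · have hmem : p ∈ n.primeFactors.filter (fun p => ¬ p ∣ a) :=
      Finset.mem_filter.mpr ⟨Nat.mem_primeFactors.mpr ⟨pp, hp2, hn⟩, hpa⟩
    have hpt : p ∣ t := Finset.dvd_prod_of_mem (fun q => q) hmem
    have : p ∣ a := by
      have := Nat.dvd_sub hp1 (hpt.mul_right b)
      rwa [Nat.add_sub_cancel] at this
    exact hpa this

/-- From exact order `n` we get unimodularity. -/
lemma gcd_eq_one (n : ℕ) (hn : 1 ≤ n) (v : Fin 2 → ZMod n)
    (hv : addOrderOf v = n) :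
    Nat.gcd (v 0).val (Nat.gcd (v 1).val n) = 1 := by
  haveI : NeZero n := ⟨by omega⟩
  by_contra hne
  set g := Nat.gcd (v 0).val (Nat.gcd (v 1).val n) with hgdef
  have hgn : g ∣ n := (Nat.gcd_dvd_right _ _).trans (Nat.gcd_dvd_right _ _)
  have hg0 : g ≠ 0 := by
    intro h0
    rw [hgdef] at h0
    have := Nat.eq_zero_of_gcd_eq_zero_right h0
    have := Nat.eq_zero_of_gcd_eq_zero_right this
    omega
  have hg2 : 2 ≤ g := by omega
  have hgle : g ≤ n := Nat.le_of_dvd (by omega) hgn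
  set m := n / g with hm
  have hmg : m * g = n := Nat.div_mul_cancel hgn
  have hm1 : 1 ≤ m := Nat.one_le_div_iff (by omega) |>.mpr hgle
  have hmlt : m < n := Nat.div_lt_self (by omega) (by omega)
  have hsm : m • v = 0 := by
    funext i
    have hga : g ∣ (v i).val := by
      fin_cases i
      · exact Nat.gcd_dvd_left _ _
      · exact (Nat.gcd_dvd_right _ _).trans (Nat.gcd_dvd_left _ _)
    obtain ⟨c, hc⟩ := hga
    have hdvd : n ∣ m * (v i).val := ⟨c, by rw [hc, ← hmg]; ring⟩
    have : (m • v) i = ((m * (v i).val : ℕ) : ZMod n) := by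
      rw [Pi.smul_apply, nsmul_eq_mul, Nat.cast_mul, ZMod.natCast_val, ZMod.cast_id]
    rw [this, Pi.zero_apply, ZMod.natCast_eq_zero_iff]
    exact hdvd
  have hdv : n ∣ m := hv ▸ addOrderOf_dvd_of_nsmul_eq_zero hsm
  exact absurd (Nat.le_of_dvd (by omega) hdv) (by omega)

/-- The orbit lemma: any vector of exact order `n` is in the commutator orbit of `![1,0]`. -/
lemma orbit (n : ℕ) (hn : 1 ≤ n) (v : Fin 2 → ZMod n) (hv : addOrderOf v = n) :
    ∃ g : GL (Fin 2) (ZMod n), g ∈ commutator (GL (Fin 2) (ZMod n)) ∧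
      (g : Matrix (Fin 2) (Fin 2) (ZMod n)).mulVec ![1, 0] = v := by
  haveI : NeZero n := ⟨by omega⟩
  obtain ⟨t, htc⟩ := exists_coprime_add n (v 0).val (v 1).val (by omega)
    (gcd_eq_one n hn v hv)
  have hunit : IsUnit ((((v 0).val + t * (v 1).val : ℕ)) : ZMod n) :=
    (ZMod.isUnit_iff_coprime _ n).mpr htc
  rw [Nat.cast_add, Nat.cast_mul, ZMod.natCast_val, ZMod.natCast_val,
    ZMod.cast_id, ZMod.cast_id] at hunit
  obtain ⟨u, hu⟩ := hunit
  set w : ZMod n := ((u⁻¹ : (ZMod n)ˣ) : ZMod n) with hw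
  have hwu : w * (u : ZMod n) = 1 := u.inv_mul
  set G := Um n (-(t : ZMod n)) * (Lm n (v 1 * w - 1) * (Um n (1 - w) * Lm n (u : ZMod n)))
    with hG
  have hPG : P n G := P_mul n (P_Um n _) (P_mul n (P_Lm n _) (P_mul n (P_Um n _) (P_Lm n _)))
  have hact : (G : Matrix (Fin 2) (Fin 2) (ZMod n)).mulVec ![1, 0] = v := by
    rw [hG, Units.val_mul, Units.val_mul, Units.val_mul,
      ← Matrix.mulVec_mulVec, ← Matrix.mulVec_mulVec, ← Matrix.mulVec_mulVec,
      Lm_mulVec, Um_mulVec, Lm_mulVec, Um_mulVec]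
    funext i
    fin_cases i <;> simp only [Matrix.cons_val_zero, Matrix.cons_val_one, Matrix.head_cons]
    · show (1 : ZMod n) + (1 - w) * (0 + ↑u * 1) +
        (-(t : ZMod n)) * ((0 + ↑u * 1) + (v 1 * w - 1) * (1 + (1 - w) * (0 + ↑u * 1))) = v 0
      linear_combination hu - ((t : ZMod n) * (v 1 - v 1 * w + 1) + 1) * hwu
    · show (0 + (u : ZMod n) * 1) + (v 1 * w - 1) * (1 + (1 - w) * (0 + ↑u * 1)) = v 1
      linear_combination (v 1 - v 1 * w + 1) * hwu
  obtain ⟨h, hh, hhv⟩ := P_e1 n hPG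
  exact ⟨h, hh, by rw [hhv, hact]⟩

end Stmt17Aux

/-- For every `n ≥ 1`, the commutator subgroup of `GL₂(ℤ/nℤ)` acts transitively
on the set of vectors of exact additive order `n` in `(ℤ/nℤ)²`. -/
theorem stmt17 (n : ℕ) (hn : 1 ≤ n) (v w : Fin 2 → ZMod n)
    (hv : addOrderOf v = n) (hw : addOrderOf w = n) :
    ∃ g : GL (Fin 2) (ZMod n), g ∈ commutator (GL (Fin 2) (ZMod n)) ∧
      (g : Matrix (Fin 2) (Fin 2) (ZMod n)).mulVec v = w := by
  obtain ⟨g₁, hg₁, e₁⟩ := Stmt17Aux.orbit n hn v hv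
  obtain ⟨g₂, hg₂, e₂⟩ := Stmt17Aux.orbit n hn w hw
  refine ⟨g₂ * g₁⁻¹, Subgroup.mul_mem _ hg₂ (Subgroup.inv_mem _ hg₁), ?_⟩
  have h1 : ((g₁⁻¹ : GL (Fin 2) (ZMod n)) : Matrix (Fin 2) (Fin 2) (ZMod n)).mulVec v
      = ![1, 0] := by
    rw [← e₁, Matrix.mulVec_mulVec, ← Units.val_mul, inv_mul_cancel, Units.val_one,
      Matrix.one_mulVec]
  rw [Units.val_mul, ← Matrix.mulVec_mulVec, h1, e₂]
end
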